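/- arXiv:1911.02858 — 3 statements merged into one kernel-verified Lean document; each statement's English description precedes it below -/
import Mathlib

section
/- An antilattice (S; ∨, ∧) in which (S; ∨) is a left-zero band (x ∨ y = x) is regular: the four Green's relations L∨, R∨, L∧, R∧ are all congruences of (S; ∨, ∧). -/
def IsAntilattice {S : Type*} (join meet : S → S → S) : Prop :=
  (∀ a b c : S, join (join a b) c = join a (join b c)) ∧
  (∀ a : S, join a a = a) ∧ (∀ a b : S, join (join a b) a = a) ∧
  (∀ a b c : S, meet (meet a b) c = meet a (meet b c)) ∧
  (∀ a : S, meet a a = a) ∧ (∀ a b : S, meet (meet a b) a = a)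

/-- A congruence of the double algebra `(S; ∨, ∧)`: an equivalence relation
compatible with both operations. -/
def IsCongruence {S : Type*} (join meet : S → S → S) (θ : S → S → Prop) : Prop :=
  Equivalence θ ∧
  ∀ a b c d : S, θ a b → θ c d → θ (join a c) (join b d) ∧ θ (meet a c) (meet b d)

/-- Green's relations of the two reducts. -/
def GreenLjoin {S : Type*} (join : S → S → S) (a b : S) : Prop := join a b = a ∧ join b a = b
def GreenRjoin {S : Type*} (join : S → S → S) (a b : S) : Prop := join a b = b ∧ join b a = a
def GreenLmeet {S : Type*} (meet : S → S → S) (a b : S) : Prop := meet a b = a ∧ meet b a = b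
def GreenRmeet {S : Type*} (meet : S → S → S) (a b : S) : Prop := meet a b = b ∧ meet b a = a

/-- A regular antilattice: all four Green's relations are congruences. -/
def IsRegularAntilattice {S : Type*} (join meet : S → S → S) : Prop :=
  IsAntilattice join meet ∧
  IsCongruence join meet (GreenLjoin join) ∧ IsCongruence join meet (GreenRjoin join) ∧
  IsCongruence join meet (GreenLmeet meet) ∧ IsCongruence join meet (GreenRmeet meet)

/-- An antilattice whose join reduct is a left-zero band is regular. -/
theorem leftZero_join_antilattice_regular {S : Type*} (join meet : S → S → S)
    (hanti : IsAntilattice join meet)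
    (hflat : ∀ x y : S, join x y = x) :
    IsCongruence join meet (GreenLjoin join) ∧
    IsCongruence join meet (GreenRjoin join) ∧
    IsCongruence join meet (GreenLmeet meet) ∧
    IsCongruence join meet (GreenRmeet meet) := by
  obtain ⟨jassoc, jidem, jrect, massoc, midem, mrect⟩ := hanti
  -- key rectangular band identity: x (y z) = x z
  have hmid : ∀ a b c : S, meet a (meet b c) = meet a c := by
    intro a b c
    have h1 : meet c (meet a c) = c := by
      have := mrect c a; rwa [massoc] at this
    have h2 : meet a (meet b (meet c a)) = a := by
      have := mrect a (meet b c); rwa [massoc, massoc] at this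
    calc meet a (meet b c) = meet a (meet b (meet c (meet a c))) := by rw [h1]
      _ = meet (meet a (meet b (meet c a))) c := by simp only [massoc]
      _ = meet a c := by rw [h2]
  refine ⟨?_, ?_, ?_, ?_⟩
  · -- GreenLjoin is the full relation
    exact ⟨⟨fun a => ⟨hflat a a, hflat a a⟩,
            fun _ => ⟨hflat _ _, hflat _ _⟩,
            fun _ _ => ⟨hflat _ _, hflat _ _⟩⟩,
          fun a b c d _ _ => ⟨⟨hflat _ _, hflat _ _⟩, ⟨hflat _ _, hflat _ _⟩⟩⟩
  · -- GreenRjoin is equality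
    have heq : ∀ a b : S, GreenRjoin join a b → a = b := by
      intro a b h
      have := h.1; rwa [hflat] at this
    refine ⟨⟨fun a => ⟨hflat a a, hflat a a⟩, ?_, ?_⟩, ?_⟩
    · intro a b h; obtain rfl := heq _ _ h; exact h
    · intro a b c h1 h2; obtain rfl := heq _ _ h1; exact h2
    · intro a b c d h1 h2
      obtain rfl := heq _ _ h1; obtain rfl := heq _ _ h2
      exact ⟨⟨hflat _ _, hflat _ _⟩, ⟨hflat _ _, hflat _ _⟩⟩
  · -- GreenLmeet
    refine ⟨⟨fun a => ⟨midem a, midem a⟩, fun h => ⟨h.2, h.1⟩, ?_⟩, ?_⟩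
    · rintro a b c ⟨hab, hba⟩ ⟨hbc, hcb⟩
      constructor
      · calc meet a c = meet (meet a b) c := by rw [hab]
          _ = meet a (meet b c) := massoc ..
          _ = meet a b := by rw [hbc]
          _ = a := hab
      · calc meet c a = meet (meet c b) a := by rw [hcb]
          _ = meet c (meet b a) := massoc ..
          _ = meet c b := by rw [hba]
          _ = c := hcb
    · rintro a b c d ⟨hab, hba⟩ ⟨hcd, hdc⟩
      refine ⟨⟨?_, ?_⟩, ?_, ?_⟩
      · rw [hflat, hflat]; exact hab
      · rw [hflat, hflat]; exact hba
      · calc meet (meet a c) (meet b d) = meet a (meet c (meet b d)) := massoc ..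
          _ = meet a (meet c d) := by rw [hmid c b d]
          _ = meet a c := by rw [hcd]
      · calc meet (meet b d) (meet a c) = meet b (meet d (meet a c)) := massoc ..
          _ = meet b (meet d c) := by rw [hmid d a c]
          _ = meet b d := by rw [hdc]
  · -- GreenRmeet
    refine ⟨⟨fun a => ⟨midem a, midem a⟩, fun h => ⟨h.2, h.1⟩, ?_⟩, ?_⟩
    · rintro a b c ⟨hab, hba⟩ ⟨hbc, hcb⟩
      constructor
      · calc meet a c = meet a (meet b c) := by rw [hbc]
          _ = meet (meet a b) c := (massoc ..).symm
          _ = meet b c := by rw [hab]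
          _ = c := hbc
      · calc meet c a = meet c (meet b a) := by rw [hba]
          _ = meet (meet c b) a := (massoc ..).symm
          _ = meet b a := by rw [hcb]
          _ = a := hba
    · rintro a b c d ⟨hab, hba⟩ ⟨hcd, hdc⟩
      refine ⟨⟨?_, ?_⟩, ?_, ?_⟩
      · rw [hflat, hflat]; exact hab
      · rw [hflat, hflat]; exact hba
      · calc meet (meet a c) (meet b d) = meet a (meet c (meet b d)) := massoc ..
          _ = meet a (meet c d) := by rw [hmid c b d]
          _ = meet a d := by rw [hcd]
          _ = meet a (meet b d) := by rw [hmid a b d]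
          _ = meet (meet a b) d := (massoc ..).symm
          _ = meet b d := by rw [hab]
      · calc meet (meet b d) (meet a c) = meet b (meet d (meet a c)) := massoc ..
          _ = meet b (meet d c) := by rw [hmid d a c]
          _ = meet b c := by rw [hdc]
          _ = meet b (meet a c) := by rw [hmid b a c]
          _ = meet (meet b a) c := (massoc ..).symm
          _ = meet a c := by rw [hba]
end

section
/- Let S be a nonempty regular antilattice whose flat decomposition has factors of sizes a, b, c, d (so S ≅ a_LL × b_LR × c_RL × d_RR). Then the number of subalgebras of S (including the empty subalgebra) is 1 + (2^a − 1)(2^b − 1)(2^c − 1)(2^d − 1). -/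
lemma card_nonempty_sets (n : ℕ) :
    Nat.card {A : Set (Fin n) // A.Nonempty} = 2 ^ n - 1 := by
  classical
  have : {A : Set (Fin n) // A.Nonempty} ≃ {A : Set (Fin n) // ¬ A = ∅} :=
    Equiv.subtypeEquivRight (fun A => by simp [Set.nonempty_iff_ne_empty])
  rw [Nat.card_congr this, Nat.card_eq_fintype_card, Fintype.card_subtype_compl,
    Fintype.card_subtype_eq, Fintype.card_set, Fintype.card_fin]

/-- If a nonempty regular antilattice `S` has flat decomposition with factors of
sizes `a, b, c, d` (i.e. `S ≅ a_LL × b_LR × c_RL × d_RR`), then the number of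
subalgebras of `S` (including the empty one) is
`1 + (2^a - 1)(2^b - 1)(2^c - 1)(2^d - 1)`. -/
theorem regular_antilattice_subalgebra_count {S : Type*} [Nonempty S]
    (join meet : S → S → S) (hreg : IsRegularAntilattice join meet)
    (a b c d : ℕ) (ha : 0 < a) (hb : 0 < b) (hc : 0 < c) (hd : 0 < d)
    (e : S ≃ Fin a × Fin b × Fin c × Fin d)
    -- the isomorphism carries `join`/`meet` to the flat product operations:
    -- LL on the first factor, LR on the second, RL on the third, RR on the fourth
    (hj : ∀ x y : S, e (join x y) =
      ((e x).1, (e x).2.1, (e y).2.2.1, (e y).2.2.2))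
    (hm : ∀ x y : S, e (meet x y) =
      ((e x).1, (e y).2.1, (e x).2.2.1, (e y).2.2.2)) :
    Nat.card {T : Set S // ∀ x ∈ T, ∀ y ∈ T, join x y ∈ T ∧ meet x y ∈ T} =
      1 + (2 ^ a - 1) * (2 ^ b - 1) * (2 ^ c - 1) * (2 ^ d - 1) := by
  classical
  set Cl : Set S → Prop := fun T => ∀ x ∈ T, ∀ y ∈ T, join x y ∈ T ∧ meet x y ∈ T with hCl
  -- key recombination lemma
  have hkey : ∀ T : Set S, Cl T → ∀ p ∈ T, ∀ q ∈ T, ∀ r ∈ T, ∀ s ∈ T,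
      e.symm ((e p).1, (e q).2.1, (e r).2.2.1, (e s).2.2.2) ∈ T := by
    intro T hT p hp q hq r hr s hs
    have hu : join p r ∈ T := (hT p hp r hr).1
    have hv : join q s ∈ T := (hT q hq s hs).1
    have hz : meet (join p r) (join q s) ∈ T := (hT _ hu _ hv).2
    have : e (meet (join p r) (join q s)) =
        ((e p).1, (e q).2.1, (e r).2.2.1, (e s).2.2.2) := by
      rw [hm, hj, hj]
    rw [← this, Equiv.symm_apply_apply]
    exact hz
  let K := {A : Set (Fin a) // A.Nonempty} × {B : Set (Fin b) // B.Nonempty} ×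
    {C : Set (Fin c) // C.Nonempty} × {D : Set (Fin d) // D.Nonempty}
  let G : Option K → {T : Set S // Cl T} := fun o =>
    match o with
    | none => ⟨∅, fun x hx => absurd hx (Set.notMem_empty x)⟩
    | some ⟨A, B, C, D⟩ =>
      ⟨{x | (e x).1 ∈ A.1 ∧ (e x).2.1 ∈ B.1 ∧ (e x).2.2.1 ∈ C.1 ∧ (e x).2.2.2 ∈ D.1},
       by
        intro x hx y hy
        constructor
        · simp only [Set.mem_setOf_eq, hj]
          exact ⟨hx.1, hx.2.1, hy.2.2.1, hy.2.2.2⟩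
        · simp only [Set.mem_setOf_eq, hm]
          exact ⟨hx.1, hy.2.1, hx.2.2.1, hy.2.2.2⟩⟩
  have hGinj : Function.Injective G := by
    rintro (_ | ⟨A, B, C, D⟩) (_ | ⟨A', B', C', D'⟩) h
    · rfl
    · exfalso
      obtain ⟨a0, ha0⟩ := A'.2; obtain ⟨b0, hb0⟩ := B'.2
      obtain ⟨c0, hc0⟩ := C'.2; obtain ⟨d0, hd0⟩ := D'.2
      have : e.symm (a0, b0, c0, d0) ∈ (G (some ⟨A', B', C', D'⟩)).1 := by
        simp only [G, Set.mem_setOf_eq, Equiv.apply_symm_apply]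
        exact ⟨ha0, hb0, hc0, hd0⟩
      rw [← h] at this
      exact this
    · exfalso
      obtain ⟨a0, ha0⟩ := A.2; obtain ⟨b0, hb0⟩ := B.2
      obtain ⟨c0, hc0⟩ := C.2; obtain ⟨d0, hd0⟩ := D.2
      have : e.symm (a0, b0, c0, d0) ∈ (G (some ⟨A, B, C, D⟩)).1 := by
        simp only [G, Set.mem_setOf_eq, Equiv.apply_symm_apply]
        exact ⟨ha0, hb0, hc0, hd0⟩
      rw [h] at this
      exact this
    · have hset : {x : S | (e x).1 ∈ A.1 ∧ (e x).2.1 ∈ B.1 ∧ (e x).2.2.1 ∈ C.1 ∧ (e x).2.2.2 ∈ D.1}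
          = {x : S | (e x).1 ∈ A'.1 ∧ (e x).2.1 ∈ B'.1 ∧ (e x).2.2.1 ∈ C'.1 ∧ (e x).2.2.2 ∈ D'.1} :=
        congrArg Subtype.val h
      obtain ⟨a0, ha0⟩ := A.2; obtain ⟨b0, hb0⟩ := B.2
      obtain ⟨c0, hc0⟩ := C.2; obtain ⟨d0, hd0⟩ := D.2
      obtain ⟨a0', ha0'⟩ := A'.2; obtain ⟨b0', hb0'⟩ := B'.2
      obtain ⟨c0', hc0'⟩ := C'.2; obtain ⟨d0', hd0'⟩ := D'.2
      have mem : ∀ (p : Fin a × Fin b × Fin c × Fin d),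
          (p.1 ∈ A.1 ∧ p.2.1 ∈ B.1 ∧ p.2.2.1 ∈ C.1 ∧ p.2.2.2 ∈ D.1) ↔
          (p.1 ∈ A'.1 ∧ p.2.1 ∈ B'.1 ∧ p.2.2.1 ∈ C'.1 ∧ p.2.2.2 ∈ D'.1) := by
        intro p
        have := Set.ext_iff.mp hset (e.symm p)
        simpa using this
      have hA : A.1 = A'.1 := by
        ext t
        constructor
        · intro ht
          exact ((mem (t, b0, c0, d0)).mp ⟨ht, hb0, hc0, hd0⟩).1
        · intro ht
          exact ((mem (t, b0', c0', d0')).mpr ⟨ht, hb0', hc0', hd0'⟩).1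
      have hB : B.1 = B'.1 := by
        ext t
        constructor
        · intro ht
          exact ((mem (a0, t, c0, d0)).mp ⟨ha0, ht, hc0, hd0⟩).2.1
        · intro ht
          exact ((mem (a0', t, c0', d0')).mpr ⟨ha0', ht, hc0', hd0'⟩).2.1
      have hC : C.1 = C'.1 := by
        ext t
        constructor
        · intro ht
          exact ((mem (a0, b0, t, d0)).mp ⟨ha0, hb0, ht, hd0⟩).2.2.1
        · intro ht
          exact ((mem (a0', b0', t, d0')).mpr ⟨ha0', hb0', ht, hd0'⟩).2.2.1
      have hD : D.1 = D'.1 := by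
        ext t
        constructor
        · intro ht
          exact ((mem (a0, b0, c0, t)).mp ⟨ha0, hb0, hc0, ht⟩).2.2.2
        · intro ht
          exact ((mem (a0', b0', c0', t)).mpr ⟨ha0', hb0', hc0', ht⟩).2.2.2
      congr 1
      exact Prod.ext (Subtype.ext hA) (Prod.ext (Subtype.ext hB)
        (Prod.ext (Subtype.ext hC) (Subtype.ext hD)))
  have hGsurj : Function.Surjective G := by
    rintro ⟨T, hT⟩
    rcases Set.eq_empty_or_nonempty T with hE | ⟨t0, ht0⟩
    · exact ⟨none, Subtype.ext hE.symm⟩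
    · refine ⟨some ⟨⟨(fun x => (e x).1) '' T, ⟨_, t0, ht0, rfl⟩⟩,
        ⟨(fun x => (e x).2.1) '' T, ⟨_, t0, ht0, rfl⟩⟩,
        ⟨(fun x => (e x).2.2.1) '' T, ⟨_, t0, ht0, rfl⟩⟩,
        ⟨(fun x => (e x).2.2.2) '' T, ⟨_, t0, ht0, rfl⟩⟩⟩, ?_⟩
      apply Subtype.ext
      show _ = T
      ext x
      simp only [G, Set.mem_setOf_eq, Set.mem_image]
      constructor
      · rintro ⟨⟨p, hp, hp'⟩, ⟨q, hq, hq'⟩, ⟨r, hr, hr'⟩, ⟨s, hs, hs'⟩⟩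
        have := hkey T hT p hp q hq r hr s hs
        rw [hp', hq', hr', hs'] at this
        have hx : e.symm ((e x).1, (e x).2.1, (e x).2.2.1, (e x).2.2.2) = x := by
          conv_rhs => rw [← e.symm_apply_apply x]
        rwa [hx] at this
      · intro hx
        exact ⟨⟨x, hx, rfl⟩, ⟨x, hx, rfl⟩, ⟨x, hx, rfl⟩, ⟨x, hx, rfl⟩⟩
  have : Nat.card {T : Set S // Cl T} = Nat.card (Option K) :=
    (Nat.card_congr (Equiv.ofBijective G ⟨hGinj, hGsurj⟩)).symm
  rw [this, Finite.card_option, Nat.card_prod, Nat.card_prod, Nat.card_prod,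
    card_nonempty_sets, card_nonempty_sets, card_nonempty_sets, card_nonempty_sets,
    mul_assoc, mul_assoc, Nat.add_comm]
end

section
/- For a prime p and e ≥ 0, the number of ordered quadruples (a, b, c, d) of positive integers with abcd = p^e equals the binomial coefficient C(e+3, 3). Consequently, the number of isomorphism classes of regular antilattices of order p^e is C(e+3, 3). -/
/-- Two antilattice structures on the same carrier are isomorphic if some
bijection carries one pair of operations to the other. -/
def AntilatticeIso {F : Type*}
    (p q : (F → F → F) × (F → F → F)) : Prop :=
  ∃ e : F ≃ F, (∀ x y : F, e (p.1 x y) = q.1 (e x) (e y)) ∧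
    (∀ x y : F, e (p.2 x y) = q.2 (e x) (e y))

set_option linter.unusedSectionVars false


open Multiset in
lemma multiset_fin4_decomp (s : Multiset (Fin 4)) :
    s = replicate (s.count 0) 0 + replicate (s.count 1) 1 +
        replicate (s.count 2) 2 + replicate (s.count 3) 3 := by
  ext a
  fin_cases a <;> simp [count_replicate]

open Multiset in
lemma count_sum_fin4 (s : Multiset (Fin 4)) :
    s.count 0 + s.count 1 + s.count 2 + s.count 3 = Multiset.card s := by
  conv_rhs => rw [multiset_fin4_decomp s]
  simp

open Multiset in
noncomputable def symEquiv (e : ℕ) :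
    {q : ℕ × ℕ × ℕ × ℕ // q.1 + q.2.1 + q.2.2.1 + q.2.2.2 = e} ≃ Sym (Fin 4) e where
  toFun q := ⟨replicate q.1.1 (0 : Fin 4) + replicate q.1.2.1 1 +
      replicate q.1.2.2.1 2 + replicate q.1.2.2.2 3, by
    simp [q.2]⟩
  invFun s := ⟨(s.1.count 0, s.1.count 1, s.1.count 2, s.1.count 3), by
    dsimp only
    rw [count_sum_fin4]
    exact s.2⟩
  left_inv q := by
    ext <;> simp [count_replicate]
  right_inv s := by
    apply Subtype.ext
    exact (multiset_fin4_decomp s.1).symm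

lemma pow_factorization_eq {p : ℕ} (hp : p.Prime) {a : ℕ} {e : ℕ} (ha : 0 < a)
    (hd : a ∣ p ^ e) : p ^ (a.factorization p) = a := by
  obtain ⟨i, hi, rfl⟩ := (Nat.dvd_prime_pow hp).mp hd
  rw [Nat.Prime.factorization_pow hp]
  simp

noncomputable def powEquiv (p e : ℕ) (hp : p.Prime) :
    {q : ℕ × ℕ × ℕ × ℕ //
        0 < q.1 ∧ 0 < q.2.1 ∧ 0 < q.2.2.1 ∧ 0 < q.2.2.2 ∧
        q.1 * q.2.1 * q.2.2.1 * q.2.2.2 = p ^ e} ≃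
    {q : ℕ × ℕ × ℕ × ℕ // q.1 + q.2.1 + q.2.2.1 + q.2.2.2 = e} where
  toFun q := ⟨(q.1.1.factorization p, q.1.2.1.factorization p,
      q.1.2.2.1.factorization p, q.1.2.2.2.factorization p), by
    obtain ⟨q, h1, h2, h3, h4, h5⟩ := q
    have d1 : q.1 ∣ p ^ e := ⟨q.2.1 * q.2.2.1 * q.2.2.2, by rw [← h5]; ring⟩
    have d2 : q.2.1 ∣ p ^ e := ⟨q.1 * q.2.2.1 * q.2.2.2, by rw [← h5]; ring⟩
    have d3 : q.2.2.1 ∣ p ^ e := ⟨q.1 * q.2.1 * q.2.2.2, by rw [← h5]; ring⟩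
    have d4 : q.2.2.2 ∣ p ^ e := ⟨q.1 * q.2.1 * q.2.2.1, by rw [← h5]; ring⟩
    apply Nat.pow_right_injective hp.two_le
    dsimp only
    rw [pow_add, pow_add, pow_add, pow_factorization_eq hp h1 d1,
      pow_factorization_eq hp h2 d2, pow_factorization_eq hp h3 d3,
      pow_factorization_eq hp h4 d4, h5]⟩
  invFun v := ⟨(p ^ v.1.1, p ^ v.1.2.1, p ^ v.1.2.2.1, p ^ v.1.2.2.2),
    pow_pos hp.pos _, pow_pos hp.pos _, pow_pos hp.pos _, pow_pos hp.pos _, by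
    rw [← pow_add, ← pow_add, ← pow_add, v.2]⟩
  left_inv q := by
    obtain ⟨q, h1, h2, h3, h4, h5⟩ := q
    have d1 : q.1 ∣ p ^ e := ⟨q.2.1 * q.2.2.1 * q.2.2.2, by rw [← h5]; ring⟩
    have d2 : q.2.1 ∣ p ^ e := ⟨q.1 * q.2.2.1 * q.2.2.2, by rw [← h5]; ring⟩
    have d3 : q.2.2.1 ∣ p ^ e := ⟨q.1 * q.2.1 * q.2.2.2, by rw [← h5]; ring⟩
    have d4 : q.2.2.2 ∣ p ^ e := ⟨q.1 * q.2.1 * q.2.2.1, by rw [← h5]; ring⟩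
    apply Subtype.ext
    simp only
    rw [pow_factorization_eq hp h1 d1, pow_factorization_eq hp h2 d2,
      pow_factorization_eq hp h3 d3, pow_factorization_eq hp h4 d4]
  right_inv v := by
    apply Subtype.ext
    simp [Nat.Prime.factorization_pow hp]

lemma part1 (p e : ℕ) (hp : p.Prime) :
    Nat.card {q : ℕ × ℕ × ℕ × ℕ //
        0 < q.1 ∧ 0 < q.2.1 ∧ 0 < q.2.2.1 ∧ 0 < q.2.2.2 ∧
        q.1 * q.2.1 * q.2.2.1 * q.2.2.2 = p ^ e} = (e + 3).choose 3 := by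
  rw [Nat.card_congr ((powEquiv p e hp).trans (symEquiv e)),
    Nat.card_eq_fintype_card, Sym.card_sym_eq_choose]
  rw [Fintype.card_fin]
  rw [show 4 + e - 1 = e + 3 by omega]
  rw [show e = e + 3 - 3 by omega]
  exact Nat.choose_symm (by omega)

/-- The standard join on a 4-fold product. -/
def Jop {A B C D : Type*} (x y : A × B × C × D) : A × B × C × D :=
  (x.1, x.2.1, y.2.2.1, y.2.2.2)

/-- The standard meet on a 4-fold product. -/
def Mop {A B C D : Type*} (x y : A × B × C × D) : A × B × C × D :=
  (x.1, y.2.1, x.2.2.1, y.2.2.2)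

section Core

variable {S : Type*} {j m : S → S → S} (h : IsRegularAntilattice j m)

set_option linter.unusedSectionVars false
namespace RA
include h

lemma jA : ∀ a b c : S, j (j a b) c = j a (j b c) := h.1.1
lemma jI : ∀ a : S, j a a = a := h.1.2.1
lemma jR : ∀ a b : S, j (j a b) a = a := h.1.2.2.1
lemma mA : ∀ a b c : S, m (m a b) c = m a (m b c) := h.1.2.2.2.1
lemma mI : ∀ a : S, m a a = a := h.1.2.2.2.2.1
lemma mR : ∀ a b : S, m (m a b) a = a := h.1.2.2.2.2.2

/-- rectangular identity for join -/
lemma jX (x y z : S) : j (j x y) z = j x z := by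
  have h1 : j x z = j (j (j x (j y z)) x) z := by rw [jR h]
  rw [jA h, jA h, jA h] at h1
  have h2 : j z (j x z) = z := by rw [← jA h, jR h]
  rw [h2] at h1
  rw [jA h]
  exact h1.symm

lemma mX (x y z : S) : m (m x y) z = m x z := by
  have h1 : m x z = m (m (m x (m y z)) x) z := by rw [mR h]
  rw [mA h, mA h, mA h] at h1
  have h2 : m z (m x z) = z := by rw [← mA h, mR h]
  rw [h2] at h1
  rw [mA h]
  exact h1.symm

lemma jX' (x y z : S) : j x (j y z) = j x z := by rw [← jA h, jX h]
lemma mX' (x y z : S) : m x (m y z) = m x z := by rw [← mA h, mX h]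

/-- `x` is `R∧`-below `x ∧ y`. -/
lemma rm_absorb (x y : S) : GreenRmeet m x (m x y) :=
  ⟨by rw [← mA h, mI h], mR h x y⟩

lemma lm_absorb (x y : S) : GreenLmeet m y (m x y) :=
  ⟨by rw [← mA h, mR h], by rw [mA h, mI h]⟩

lemma lj_jo (x o : S) : GreenLjoin j (j x o) o :=
  ⟨by rw [jA h, jI h], by rw [jX' h, jI h]⟩

lemma rj_oj (o x : S) : GreenRjoin j o (j o x) :=
  ⟨by rw [← jA h, jI h], jX h o x o ▸ (jR h o x)⟩

lemma lm_mo (a o : S) : GreenLmeet m (m a o) o :=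
  ⟨by rw [mA h, mI h], by rw [← mA h]; exact mR h o a⟩

lemma rm_om (o a : S) : GreenRmeet m (m o a) o :=
  ⟨mR h o a, by rw [← mA h, mI h]⟩

lemma eq_of_lm_rm {a b : S} (h1 : GreenLmeet m a b) (h2 : GreenRmeet m a b) : a = b := by
  rw [← h1.1, h2.1]

lemma eq_of_lj_rj {a b : S} (h1 : GreenLjoin j a b) (h2 : GreenRjoin j a b) : a = b := by
  rw [← h1.1, h2.1]

end RA

end Core

section Decomp

variable {S : Type*} {j m : S → S → S} (h : IsRegularAntilattice j m) (o : S)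

namespace RA

/-- projections relative to a base point `o` -/
def p1 (j m : S → S → S) (o x : S) : S := m (j x o) o
def p2 (j m : S → S → S) (o x : S) : S := m o (j x o)
def p3 (j m : S → S → S) (o x : S) : S := m (j o x) o
def p4 (j m : S → S → S) (o x : S) : S := m o (j o x)

include h

-- congruence accessors
lemma cLj : IsCongruence j m (GreenLjoin j) := h.2.1
lemma cRj : IsCongruence j m (GreenRjoin j) := h.2.2.1
lemma cLm : IsCongruence j m (GreenLmeet m) := h.2.2.2.1
lemma cRm : IsCongruence j m (GreenRmeet m) := h.2.2.2.2

lemma L1 (x y : S) : p1 j m o (j x y) = p1 j m o x := by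
  unfold p1; rw [jX h]
lemma L2 (x y : S) : p2 j m o (j x y) = p2 j m o x := by
  unfold p2; rw [jX h]
lemma L3 (x y : S) : p3 j m o (j x y) = p3 j m o y := by
  unfold p3; rw [jX' h]
lemma L4 (x y : S) : p4 j m o (j x y) = p4 j m o y := by
  unfold p4; rw [jX' h]

lemma M1 (x y : S) : p1 j m o (m x y) = p1 j m o x := by
  have hR : GreenRmeet m x (m x y) := rm_absorb h x y
  have h1 : GreenRmeet m (j x o) (j (m x y) o) :=
    ((cRm h).2 _ _ _ _ hR ((cRm h).1.refl o)).1
  have h2 : GreenRmeet m (m (j x o) o) (m (j (m x y) o) o) :=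
    ((cRm h).2 _ _ _ _ h1 ((cRm h).1.refl o)).2
  have h3 : GreenLmeet m (m (j x o) o) (m (j (m x y) o) o) :=
    (cLm h).1.trans (lm_mo h _ o) ((cLm h).1.symm (lm_mo h _ o))
  exact (eq_of_lm_rm h h3 h2).symm

lemma M2 (x y : S) : p2 j m o (m x y) = p2 j m o y := by
  have hL : GreenLmeet m y (m x y) := lm_absorb h x y
  have h1 : GreenLmeet m (j y o) (j (m x y) o) :=
    ((cLm h).2 _ _ _ _ hL ((cLm h).1.refl o)).1
  have h2 : GreenLmeet m (m o (j y o)) (m o (j (m x y) o)) :=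
    ((cLm h).2 _ _ _ _ ((cLm h).1.refl o) h1).2
  have h3 : GreenRmeet m (m o (j y o)) (m o (j (m x y) o)) :=
    (cRm h).1.trans (rm_om h o _) ((cRm h).1.symm (rm_om h o _))
  exact (eq_of_lm_rm h h2 h3).symm

lemma M3 (x y : S) : p3 j m o (m x y) = p3 j m o x := by
  have hR : GreenRmeet m x (m x y) := rm_absorb h x y
  have h1 : GreenRmeet m (j o x) (j o (m x y)) :=
    ((cRm h).2 _ _ _ _ ((cRm h).1.refl o) hR).1
  have h2 : GreenRmeet m (m (j o x) o) (m (j o (m x y)) o) :=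
    ((cRm h).2 _ _ _ _ h1 ((cRm h).1.refl o)).2
  have h3 : GreenLmeet m (m (j o x) o) (m (j o (m x y)) o) :=
    (cLm h).1.trans (lm_mo h _ o) ((cLm h).1.symm (lm_mo h _ o))
  exact (eq_of_lm_rm h h3 h2).symm

lemma M4 (x y : S) : p4 j m o (m x y) = p4 j m o y := by
  have hL : GreenLmeet m y (m x y) := lm_absorb h x y
  have h1 : GreenLmeet m (j o y) (j o (m x y)) :=
    ((cLm h).2 _ _ _ _ ((cLm h).1.refl o) hL).1
  have h2 : GreenLmeet m (m o (j o y)) (m o (j o (m x y))) :=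
    ((cLm h).2 _ _ _ _ ((cLm h).1.refl o) h1).2
  have h3 : GreenRmeet m (m o (j o y)) (m o (j o (m x y))) :=
    (cRm h).1.trans (rm_om h o _) ((cRm h).1.symm (rm_om h o _))
  exact (eq_of_lm_rm h h2 h3).symm

lemma Idem1 (x : S) : p1 j m o (p1 j m o x) = p1 j m o x := by
  have hL : GreenLjoin j (m (j x o) o) o := by
    have := ((cLj h).2 _ _ _ _ (lj_jo h x o) ((cLj h).1.refl o)).2
    rwa [mI h] at this
  show m (j (m (j x o) o) o) o = m (j x o) o
  rw [hL.1, mA h, mI h]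

lemma Idem2 (x : S) : p2 j m o (p2 j m o x) = p2 j m o x := by
  have hL : GreenLjoin j (m o (j x o)) o := by
    have := ((cLj h).2 _ _ _ _ ((cLj h).1.refl o) (lj_jo h x o)).2
    rwa [mI h] at this
  show m o (j (m o (j x o)) o) = m o (j x o)
  rw [hL.1, ← mA h, mI h]

lemma Idem3 (x : S) : p3 j m o (p3 j m o x) = p3 j m o x := by
  have hR : GreenRjoin j o (m (j o x) o) := by
    have := ((cRj h).2 _ _ _ _ (rj_oj h o x) ((cRj h).1.refl o)).2
    rwa [mI h] at this
  show m (j o (m (j o x) o)) o = m (j o x) o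
  rw [hR.1, mA h, mI h]

lemma Idem4 (x : S) : p4 j m o (p4 j m o x) = p4 j m o x := by
  have hR : GreenRjoin j o (m o (j o x)) := by
    have := ((cRj h).2 _ _ _ _ ((cRj h).1.refl o) (rj_oj h o x)).2
    rwa [mI h] at this
  show m o (j o (m o (j o x))) = m o (j o x)
  rw [hR.1, ← mA h, mI h]

lemma recon (x : S) :
    j (m (p1 j m o x) (p2 j m o x))
      (m (p3 j m o x) (p4 j m o x)) = x := by
  show j (m (m (j x o) o) (m o (j x o))) (m (m (j o x) o) (m o (j o x))) = x
  have e1 : ∀ u : S, m (m u o) (m o u) = u := by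
    intro u
    rw [mX h, ← mA h, mR h]
  rw [e1, e1, jX h, jX' h, jI h]

end RA

/-- Decomposition theorem for regular antilattices (with a base point). -/
theorem exists_decomp {S : Type u} (j m : S → S → S) (h : IsRegularAntilattice j m) (o : S) :
    ∃ (A B C D : Type u) (f : S ≃ (A × B × C × D)),
      (∀ x y, f (j x y) = Jop (f x) (f y)) ∧ (∀ x y, f (m x y) = Mop (f x) (f y)) := by
  classical
  refine ⟨{a : S // RA.p1 j m o a = a}, {a : S // RA.p2 j m o a = a},
    {a : S // RA.p3 j m o a = a}, {a : S // RA.p4 j m o a = a},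
    ⟨fun x => (⟨RA.p1 j m o x, RA.Idem1 h o x⟩, ⟨RA.p2 j m o x, RA.Idem2 h o x⟩,
       ⟨RA.p3 j m o x, RA.Idem3 h o x⟩, ⟨RA.p4 j m o x, RA.Idem4 h o x⟩),
     fun q => j (m q.1.1 q.2.1.1) (m q.2.2.1.1 q.2.2.2.1), ?_, ?_⟩, ?_, ?_⟩
  · intro x
    exact RA.recon h o x
  · rintro ⟨⟨a, ha⟩, ⟨b, hb⟩, ⟨c, hc⟩, ⟨d, hd⟩⟩
    simp only [Equiv.coe_fn_mk]
    ext
    · show RA.p1 j m o (j (m a b) (m c d)) = a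
      rw [RA.L1 h, RA.M1 h, ha]
    · show RA.p2 j m o (j (m a b) (m c d)) = b
      rw [RA.L2 h, RA.M2 h, hb]
    · show RA.p3 j m o (j (m a b) (m c d)) = c
      rw [RA.L3 h, RA.M3 h, hc]
    · show RA.p4 j m o (j (m a b) (m c d)) = d
      rw [RA.L4 h, RA.M4 h, hd]
  · intro x y
    simp only [Equiv.coe_fn_mk, Jop]
    ext
    · exact congrArg Subtype.val (by ext1; exact RA.L1 h o x y) |>.trans rfl
    · show RA.p2 j m o (j x y) = RA.p2 j m o x
      exact RA.L2 h o x y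
    · show RA.p3 j m o (j x y) = RA.p3 j m o y
      exact RA.L3 h o x y
    · show RA.p4 j m o (j x y) = RA.p4 j m o y
      exact RA.L4 h o x y
  · intro x y
    simp only [Equiv.coe_fn_mk, Mop]
    ext
    · show RA.p1 j m o (m x y) = RA.p1 j m o x
      exact RA.M1 h o x y
    · show RA.p2 j m o (m x y) = RA.p2 j m o y
      exact RA.M2 h o x y
    · show RA.p3 j m o (m x y) = RA.p3 j m o x
      exact RA.M3 h o x y
    · show RA.p4 j m o (m x y) = RA.p4 j m o y
      exact RA.M4 h o x y

end Decomp
section Transport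

variable {α β : Type*}

/-- operation-preserving equivalence between two carriers -/
def OpIso (e : α ≃ β) (P : (α → α → α) × (α → α → α)) (Q : (β → β → β) × (β → β → β)) : Prop :=
  (∀ x y, e (P.1 x y) = Q.1 (e x) (e y)) ∧ (∀ x y, e (P.2 x y) = Q.2 (e x) (e y))

lemma green_pair_iff (e : α ≃ β) {f : α → α → α} {g : β → β → β}
    (hf : ∀ x y, e (f x y) = g (e x) (e y)) (a b : α) :
    (f a b = a ∧ f b a = b) ↔ (g (e a) (e b) = e a ∧ g (e b) (e a) = e b) := by
  rw [← hf, ← hf, e.apply_eq_iff_eq, e.apply_eq_iff_eq]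

lemma green_pairR_iff (e : α ≃ β) {f : α → α → α} {g : β → β → β}
    (hf : ∀ x y, e (f x y) = g (e x) (e y)) (a b : α) :
    (f a b = b ∧ f b a = a) ↔ (g (e a) (e b) = e b ∧ g (e b) (e a) = e a) := by
  rw [← hf, ← hf, e.apply_eq_iff_eq, e.apply_eq_iff_eq]

variable {e : α ≃ β} {P : (α → α → α) × (α → α → α)} {Q : (β → β → β) × (β → β → β)}

lemma opIso_symm_join (h : OpIso e P Q) (x y : β) :
    e.symm (Q.1 x y) = P.1 (e.symm x) (e.symm y) := by
  apply e.injective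
  rw [h.1, e.apply_symm_apply, e.apply_symm_apply, e.apply_symm_apply]

lemma opIso_symm_meet (h : OpIso e P Q) (x y : β) :
    e.symm (Q.2 x y) = P.2 (e.symm x) (e.symm y) := by
  apply e.injective
  rw [h.2, e.apply_symm_apply, e.apply_symm_apply, e.apply_symm_apply]

lemma greenLjoin_opIso (h : OpIso e P Q) (a b : β) :
    GreenLjoin Q.1 a b ↔ GreenLjoin P.1 (e.symm a) (e.symm b) :=
  green_pair_iff e.symm (opIso_symm_join h) a b

lemma greenRjoin_opIso (h : OpIso e P Q) (a b : β) :
    GreenRjoin Q.1 a b ↔ GreenRjoin P.1 (e.symm a) (e.symm b) :=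
  green_pairR_iff e.symm (opIso_symm_join h) a b

lemma greenLmeet_opIso (h : OpIso e P Q) (a b : β) :
    GreenLmeet Q.2 a b ↔ GreenLmeet P.2 (e.symm a) (e.symm b) :=
  green_pair_iff e.symm (opIso_symm_meet h) a b

lemma greenRmeet_opIso (h : OpIso e P Q) (a b : β) :
    GreenRmeet Q.2 a b ↔ GreenRmeet P.2 (e.symm a) (e.symm b) :=
  green_pairR_iff e.symm (opIso_symm_meet h) a b

lemma isCongruence_of_opIso (h : OpIso e P Q) {θ : α → α → Prop} {θ' : β → β → Prop}
    (hθ : ∀ a b, θ' a b ↔ θ (e.symm a) (e.symm b))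
    (hc : IsCongruence P.1 P.2 θ) : IsCongruence Q.1 Q.2 θ' := by
  constructor
  · constructor
    · intro a; rw [hθ]; exact hc.1.refl _
    · intro a b hab; rw [hθ] at *; exact hc.1.symm hab
    · intro a b c hab hbc; rw [hθ] at *; exact hc.1.trans hab hbc
  · intro a b c d hab hcd
    rw [hθ] at hab hcd
    constructor
    · rw [hθ, opIso_symm_join h, opIso_symm_join h]
      exact (hc.2 _ _ _ _ hab hcd).1
    · rw [hθ, opIso_symm_meet h, opIso_symm_meet h]
      exact (hc.2 _ _ _ _ hab hcd).2

lemma regular_of_opIso (h : OpIso e P Q) (hr : IsRegularAntilattice P.1 P.2) :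
    IsRegularAntilattice Q.1 Q.2 := by
  refine ⟨⟨?_, ?_, ?_, ?_, ?_, ?_⟩, ?_, ?_, ?_, ?_⟩
  · intro a b c
    apply e.symm.injective
    simp only [opIso_symm_join h]
    exact hr.1.1 _ _ _
  · intro a
    apply e.symm.injective
    simp only [opIso_symm_join h]
    exact hr.1.2.1 _
  · intro a b
    apply e.symm.injective
    simp only [opIso_symm_join h]
    exact hr.1.2.2.1 _ _
  · intro a b c
    apply e.symm.injective
    simp only [opIso_symm_meet h]
    exact hr.1.2.2.2.1 _ _ _
  · intro a
    apply e.symm.injective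
    simp only [opIso_symm_meet h]
    exact hr.1.2.2.2.2.1 _
  · intro a b
    apply e.symm.injective
    simp only [opIso_symm_meet h]
    exact hr.1.2.2.2.2.2 _ _
  · exact isCongruence_of_opIso h (greenLjoin_opIso h) hr.2.1
  · exact isCongruence_of_opIso h (greenRjoin_opIso h) hr.2.2.1
  · exact isCongruence_of_opIso h (greenLmeet_opIso h) hr.2.2.2.1
  · exact isCongruence_of_opIso h (greenRmeet_opIso h) hr.2.2.2.2

/-- The four invariant relations. -/
def T1 {S : Type*} (jm : (S → S → S) × (S → S → S)) (a b : S) : Prop :=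
  GreenLjoin jm.1 a b ∧ GreenLmeet jm.2 a b
def T2 {S : Type*} (jm : (S → S → S) × (S → S → S)) (a b : S) : Prop :=
  GreenLjoin jm.1 a b ∧ GreenRmeet jm.2 a b
def T3 {S : Type*} (jm : (S → S → S) × (S → S → S)) (a b : S) : Prop :=
  GreenRjoin jm.1 a b ∧ GreenLmeet jm.2 a b
def T4 {S : Type*} (jm : (S → S → S) × (S → S → S)) (a b : S) : Prop :=
  GreenRjoin jm.1 a b ∧ GreenRmeet jm.2 a b

lemma quotT1_card_of_opIso (h : OpIso e P Q) :
    Nat.card (Quot (T1 P)) = Nat.card (Quot (T1 Q)) := by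
  apply Nat.card_congr
  refine Quot.congr e (fun a b => ?_)
  rw [T1, T1, greenLjoin_opIso h, greenLmeet_opIso h, e.symm_apply_apply, e.symm_apply_apply]

lemma quotT2_card_of_opIso (h : OpIso e P Q) :
    Nat.card (Quot (T2 P)) = Nat.card (Quot (T2 Q)) := by
  apply Nat.card_congr
  refine Quot.congr e (fun a b => ?_)
  rw [T2, T2, greenLjoin_opIso h, greenRmeet_opIso h, e.symm_apply_apply, e.symm_apply_apply]

lemma quotT3_card_of_opIso (h : OpIso e P Q) :
    Nat.card (Quot (T3 P)) = Nat.card (Quot (T3 Q)) := by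
  apply Nat.card_congr
  refine Quot.congr e (fun a b => ?_)
  rw [T3, T3, greenRjoin_opIso h, greenLmeet_opIso h, e.symm_apply_apply, e.symm_apply_apply]

lemma quotT4_card_of_opIso (h : OpIso e P Q) :
    Nat.card (Quot (T4 P)) = Nat.card (Quot (T4 Q)) := by
  apply Nat.card_congr
  refine Quot.congr e (fun a b => ?_)
  rw [T4, T4, greenRjoin_opIso h, greenRmeet_opIso h, e.symm_apply_apply, e.symm_apply_apply]

end Transport
section ModelProps

variable {A B C D : Type*}

lemma greenLjoin_Jop (x y : A × B × C × D) :
    GreenLjoin (Jop) x y ↔ x.2.2.1 = y.2.2.1 ∧ x.2.2.2 = y.2.2.2 := by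
  constructor
  · rintro ⟨h1, h2⟩
    exact ⟨congrArg (fun z => z.2.2.1) h2, congrArg (fun z => z.2.2.2) h2⟩
  · rintro ⟨h1, h2⟩
    exact ⟨Prod.ext rfl (Prod.ext rfl (Prod.ext h1.symm h2.symm)),
           Prod.ext rfl (Prod.ext rfl (Prod.ext h1 h2))⟩

lemma greenRjoin_Jop (x y : A × B × C × D) :
    GreenRjoin (Jop) x y ↔ x.1 = y.1 ∧ x.2.1 = y.2.1 := by
  constructor
  · rintro ⟨h1, h2⟩
    exact ⟨congrArg (fun z => z.1) h1, congrArg (fun z => z.2.1) h1⟩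
  · rintro ⟨h1, h2⟩
    exact ⟨Prod.ext h1 (Prod.ext h2 (Prod.ext rfl rfl)),
           Prod.ext h1.symm (Prod.ext h2.symm (Prod.ext rfl rfl))⟩

lemma greenLmeet_Mop (x y : A × B × C × D) :
    GreenLmeet (Mop) x y ↔ x.2.1 = y.2.1 ∧ x.2.2.2 = y.2.2.2 := by
  constructor
  · rintro ⟨h1, h2⟩
    exact ⟨congrArg (fun z => z.2.1) h2, congrArg (fun z => z.2.2.2) h2⟩
  · rintro ⟨h1, h2⟩
    exact ⟨Prod.ext rfl (Prod.ext h1.symm (Prod.ext rfl h2.symm)),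
           Prod.ext rfl (Prod.ext h1 (Prod.ext rfl h2))⟩

lemma greenRmeet_Mop (x y : A × B × C × D) :
    GreenRmeet (Mop) x y ↔ x.1 = y.1 ∧ x.2.2.1 = y.2.2.1 := by
  constructor
  · rintro ⟨h1, h2⟩
    exact ⟨congrArg (fun z => z.1) h1, congrArg (fun z => z.2.2.1) h1⟩
  · rintro ⟨h1, h2⟩
    exact ⟨Prod.ext h1 (Prod.ext rfl (Prod.ext h2 rfl)),
           Prod.ext h1.symm (Prod.ext rfl (Prod.ext h2.symm rfl))⟩

lemma regular_JopMop : IsRegularAntilattice (Jop (A := A) (B := B) (C := C) (D := D)) Mop := by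
  refine ⟨⟨fun a b c => rfl, fun a => rfl, fun a b => rfl,
          fun a b c => rfl, fun a => rfl, fun a b => rfl⟩, ?_, ?_, ?_, ?_⟩
  · constructor
    · constructor
      · intro a; simp [greenLjoin_Jop]
      · intro a b hab; simp only [greenLjoin_Jop] at *; exact ⟨hab.1.symm, hab.2.symm⟩
      · intro a b c hab hbc; simp only [greenLjoin_Jop] at *
        exact ⟨hab.1.trans hbc.1, hab.2.trans hbc.2⟩
    · intro a b c d hab hcd
      simp only [greenLjoin_Jop] at *
      exact ⟨⟨hcd.1, hcd.2⟩, ⟨hab.1, hcd.2⟩⟩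
  · constructor
    · constructor
      · intro a; simp [greenRjoin_Jop]
      · intro a b hab; simp only [greenRjoin_Jop] at *; exact ⟨hab.1.symm, hab.2.symm⟩
      · intro a b c hab hbc; simp only [greenRjoin_Jop] at *
        exact ⟨hab.1.trans hbc.1, hab.2.trans hbc.2⟩
    · intro a b c d hab hcd
      simp only [greenRjoin_Jop] at *
      exact ⟨⟨hab.1, hab.2⟩, ⟨hab.1, hcd.2⟩⟩
  · constructor
    · constructor
      · intro a; simp [greenLmeet_Mop]
      · intro a b hab; simp only [greenLmeet_Mop] at *; exact ⟨hab.1.symm, hab.2.symm⟩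
      · intro a b c hab hbc; simp only [greenLmeet_Mop] at *
        exact ⟨hab.1.trans hbc.1, hab.2.trans hbc.2⟩
    · intro a b c d hab hcd
      simp only [greenLmeet_Mop] at *
      exact ⟨⟨hab.1, hcd.2⟩, ⟨hcd.1, hcd.2⟩⟩
  · constructor
    · constructor
      · intro a; simp [greenRmeet_Mop]
      · intro a b hab; simp only [greenRmeet_Mop] at *; exact ⟨hab.1.symm, hab.2.symm⟩
      · intro a b c hab hbc; simp only [greenRmeet_Mop] at *
        exact ⟨hab.1.trans hbc.1, hab.2.trans hbc.2⟩
    · intro a b c d hab hcd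
      simp only [greenRmeet_Mop] at *
      exact ⟨⟨hab.1, hcd.2⟩, ⟨hab.1, hab.2⟩⟩

variable [Nonempty A] [Nonempty B] [Nonempty C] [Nonempty D]

noncomputable def quotT1Equiv : Quot (T1 ((Jop : A × B × C × D → _ → _), Mop)) ≃ B × C × D where
  toFun := Quot.lift (fun x => x.2) (by
    rintro a b ⟨h1, h2⟩
    rw [greenLjoin_Jop] at h1; rw [greenLmeet_Mop] at h2
    exact Prod.ext h2.1 (Prod.ext h1.1 h1.2))
  invFun v := Quot.mk _ (Classical.arbitrary A, v)
  left_inv := by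
    apply Quot.ind
    intro x
    apply Quot.sound
    constructor
    · rw [greenLjoin_Jop]; exact ⟨rfl, rfl⟩
    · rw [greenLmeet_Mop]; exact ⟨rfl, rfl⟩
  right_inv v := rfl

noncomputable def quotT2Equiv : Quot (T2 ((Jop : A × B × C × D → _ → _), Mop)) ≃ A × C × D where
  toFun := Quot.lift (fun x => (x.1, x.2.2)) (by
    rintro a b ⟨h1, h2⟩
    rw [greenLjoin_Jop] at h1; rw [greenRmeet_Mop] at h2
    exact Prod.ext h2.1 (Prod.ext h1.1 h1.2))
  invFun v := Quot.mk _ (v.1, Classical.arbitrary B, v.2)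
  left_inv := by
    apply Quot.ind
    intro x
    apply Quot.sound
    constructor
    · rw [greenLjoin_Jop]; exact ⟨rfl, rfl⟩
    · rw [greenRmeet_Mop]; exact ⟨rfl, rfl⟩
  right_inv v := rfl

noncomputable def quotT3Equiv : Quot (T3 ((Jop : A × B × C × D → _ → _), Mop)) ≃ A × B × D where
  toFun := Quot.lift (fun x => (x.1, x.2.1, x.2.2.2)) (by
    rintro a b ⟨h1, h2⟩
    rw [greenRjoin_Jop] at h1; rw [greenLmeet_Mop] at h2
    exact Prod.ext h1.1 (Prod.ext h1.2 h2.2))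
  invFun v := Quot.mk _ (v.1, v.2.1, Classical.arbitrary C, v.2.2)
  left_inv := by
    apply Quot.ind
    intro x
    apply Quot.sound
    constructor
    · rw [greenRjoin_Jop]; exact ⟨rfl, rfl⟩
    · rw [greenLmeet_Mop]; exact ⟨rfl, rfl⟩
  right_inv v := rfl

noncomputable def quotT4Equiv : Quot (T4 ((Jop : A × B × C × D → _ → _), Mop)) ≃ A × B × C where
  toFun := Quot.lift (fun x => (x.1, x.2.1, x.2.2.1)) (by
    rintro a b ⟨h1, h2⟩
    rw [greenRjoin_Jop] at h1; rw [greenRmeet_Mop] at h2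
    exact Prod.ext h1.1 (Prod.ext h1.2 h2.2))
  invFun v := Quot.mk _ (v.1, v.2.1, v.2.2, Classical.arbitrary D)
  left_inv := by
    apply Quot.ind
    intro x
    apply Quot.sound
    constructor
    · rw [greenRjoin_Jop]; exact ⟨rfl, rfl⟩
    · rw [greenRmeet_Mop]; exact ⟨rfl, rfl⟩
  right_inv v := rfl

end ModelProps
section Assemble

lemma opIso_symm {α β : Type*} {e : α ≃ β} {P Q} (h : OpIso e P Q) : OpIso e.symm Q P :=
  ⟨opIso_symm_join h, opIso_symm_meet h⟩

lemma opIso_trans {α β γ : Type*} {e : α ≃ β} {e' : β ≃ γ} {P Q R}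
    (h : OpIso e P Q) (h' : OpIso e' Q R) : OpIso (e.trans e') P R := by
  constructor
  · intro x y
    show e' (e (P.1 x y)) = R.1 (e' (e x)) (e' (e y))
    rw [h.1, h'.1]
  · intro x y
    show e' (e (P.2 x y)) = R.2 (e' (e x)) (e' (e y))
    rw [h.2, h'.2]

lemma antilatticeIso_refl {F : Type*} (p : (F → F → F) × (F → F → F)) : AntilatticeIso p p :=
  ⟨Equiv.refl F, fun _ _ => rfl, fun _ _ => rfl⟩

lemma antilatticeIso_symm {F : Type*} {p q : (F → F → F) × (F → F → F)}
    (h : AntilatticeIso p q) : AntilatticeIso q p := by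
  obtain ⟨e, h1, h2⟩ := h
  exact ⟨e.symm, (opIso_symm (⟨h1, h2⟩ : OpIso e p q)).1, (opIso_symm (⟨h1, h2⟩ : OpIso e p q)).2⟩

lemma antilatticeIso_trans {F : Type*} {p q r : (F → F → F) × (F → F → F)}
    (h : AntilatticeIso p q) (h' : AntilatticeIso q r) : AntilatticeIso p r := by
  obtain ⟨e, h1, h2⟩ := h
  obtain ⟨e', h1', h2'⟩ := h'
  exact ⟨e.trans e', (opIso_trans (⟨h1, h2⟩ : OpIso e p q) ⟨h1', h2'⟩).1,
    (opIso_trans (⟨h1, h2⟩ : OpIso e p q) (⟨h1', h2'⟩ : OpIso e' q r)).2⟩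

noncomputable def modelE (n a b c d : ℕ) (h : a * b * c * d = n) :
    Fin n ≃ Fin a × Fin b × Fin c × Fin d :=
  Fintype.equivOfCardEq (by simp only [Fintype.card_fin, Fintype.card_prod]; rw [← h]; ring)

noncomputable def modelOps (n a b c d : ℕ) (h : a * b * c * d = n) :
    (Fin n → Fin n → Fin n) × (Fin n → Fin n → Fin n) :=
  (fun x y => (modelE n a b c d h).symm (Jop (modelE n a b c d h x) (modelE n a b c d h y)),
   fun x y => (modelE n a b c d h).symm (Mop (modelE n a b c d h x) (modelE n a b c d h y)))

lemma modelOps_opIso (n a b c d : ℕ) (h : a * b * c * d = n) :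
    OpIso (modelE n a b c d h) (modelOps n a b c d h)
      ((Jop, Mop) : (Fin a × Fin b × Fin c × Fin d → _ → _) × _) := by
  constructor <;> intro x y <;> simp [modelOps]

lemma modelOps_regular (n a b c d : ℕ) (h : a * b * c * d = n) :
    IsRegularAntilattice (modelOps n a b c d h).1 (modelOps n a b c d h).2 :=
  regular_of_opIso (opIso_symm (modelOps_opIso n a b c d h)) regular_JopMop

noncomputable def modelStruct (n a b c d : ℕ) (h : a * b * c * d = n) :
    {jm : (Fin n → Fin n → Fin n) × (Fin n → Fin n → Fin n) //
      IsRegularAntilattice jm.1 jm.2} :=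
  ⟨modelOps n a b c d h, modelOps_regular n a b c d h⟩

lemma model_inv (n a b c d : ℕ) (h : a * b * c * d = n)
    (ha : 0 < a) (hb : 0 < b) (hc : 0 < c) (hd : 0 < d) :
    Nat.card (Quot (T1 (modelOps n a b c d h))) = b * c * d ∧
    Nat.card (Quot (T2 (modelOps n a b c d h))) = a * c * d ∧
    Nat.card (Quot (T3 (modelOps n a b c d h))) = a * b * d ∧
    Nat.card (Quot (T4 (modelOps n a b c d h))) = a * b * c := by
  haveI : Nonempty (Fin a) := ⟨⟨0, ha⟩⟩
  haveI : Nonempty (Fin b) := ⟨⟨0, hb⟩⟩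
  haveI : Nonempty (Fin c) := ⟨⟨0, hc⟩⟩
  haveI : Nonempty (Fin d) := ⟨⟨0, hd⟩⟩
  have hi := modelOps_opIso n a b c d h
  refine ⟨?_, ?_, ?_, ?_⟩
  · rw [quotT1_card_of_opIso hi, Nat.card_congr quotT1Equiv]
    simp [Nat.card_prod, mul_assoc]
  · rw [quotT2_card_of_opIso hi, Nat.card_congr quotT2Equiv]
    simp [Nat.card_prod, mul_assoc]
  · rw [quotT3_card_of_opIso hi, Nat.card_congr quotT3Equiv]
    simp [Nat.card_prod, mul_assoc]
  · rw [quotT4_card_of_opIso hi, Nat.card_congr quotT4Equiv]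
    simp [Nat.card_prod, mul_assoc]

lemma prodCongr_Jop {A B C D A' B' C' D' : Type*} (fA : A ≃ A') (fB : B ≃ B')
    (fC : C ≃ C') (fD : D ≃ D') (x y : A × B × C × D) :
    (fA.prodCongr (fB.prodCongr (fC.prodCongr fD))) (Jop x y) =
      Jop ((fA.prodCongr (fB.prodCongr (fC.prodCongr fD))) x)
        ((fA.prodCongr (fB.prodCongr (fC.prodCongr fD))) y) := rfl

lemma prodCongr_Mop {A B C D A' B' C' D' : Type*} (fA : A ≃ A') (fB : B ≃ B')
    (fC : C ≃ C') (fD : D ≃ D') (x y : A × B × C × D) :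
    (fA.prodCongr (fB.prodCongr (fC.prodCongr fD))) (Mop x y) =
      Mop ((fA.prodCongr (fB.prodCongr (fC.prodCongr fD))) x)
        ((fA.prodCongr (fB.prodCongr (fC.prodCongr fD))) y) := rfl

end Assemble
section Main

lemma isoRel_equivalence {F : Type*} :
    Equivalence (fun a b : {jm : (F → F → F) × (F → F → F) //
        IsRegularAntilattice jm.1 jm.2} => AntilatticeIso a.1 b.1) :=
  ⟨fun x => antilatticeIso_refl x.1, antilatticeIso_symm, antilatticeIso_trans⟩

lemma part2 (p e : ℕ) (hp : p.Prime) :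
    Nat.card (Quot (fun a b :
        {jm : (Fin (p ^ e) → Fin (p ^ e) → Fin (p ^ e)) ×
              (Fin (p ^ e) → Fin (p ^ e) → Fin (p ^ e)) //
          IsRegularAntilattice jm.1 jm.2} => AntilatticeIso a.1 b.1)) =
      Nat.card {q : ℕ × ℕ × ℕ × ℕ //
        0 < q.1 ∧ 0 < q.2.1 ∧ 0 < q.2.2.1 ∧ 0 < q.2.2.2 ∧
        q.1 * q.2.1 * q.2.2.1 * q.2.2.2 = p ^ e} := by
  have hnpos : 0 < p ^ e := pow_pos hp.pos e
  refine (Nat.card_eq_of_bijective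
    (fun q => Quot.mk _ (modelStruct (p ^ e) q.1.1 q.1.2.1 q.1.2.2.1 q.1.2.2.2
      q.2.2.2.2.2)) ⟨?_, ?_⟩).symm
  · -- injectivity
    rintro ⟨⟨a, b, c, d⟩, ha, hb, hc, hd, hprod⟩ ⟨⟨a', b', c', d'⟩, ha', hb', hc', hd', hprod'⟩ hqq
    simp only at hqq
    have hrel : AntilatticeIso (modelStruct (p ^ e) a b c d hprod).1
        (modelStruct (p ^ e) a' b' c' d' hprod').1 := by
      have h1 := Quot.eqvGen_exact hqq
      rwa [isoRel_equivalence.eqvGen_eq] at h1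
    obtain ⟨f, hf1, hf2⟩ := hrel
    have hiso : OpIso f (modelOps (p ^ e) a b c d hprod)
        (modelOps (p ^ e) a' b' c' d' hprod') := ⟨hf1, hf2⟩
    obtain ⟨i1, i2, i3, i4⟩ := model_inv (p ^ e) a b c d hprod ha hb hc hd
    obtain ⟨i1', i2', i3', i4'⟩ := model_inv (p ^ e) a' b' c' d' hprod' ha' hb' hc' hd'
    have j1 : b * c * d = b' * c' * d' := by
      rw [← i1, ← i1']; exact quotT1_card_of_opIso hiso
    have j2 : a * c * d = a' * c' * d' := by
      rw [← i2, ← i2']; exact quotT2_card_of_opIso hiso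
    have j3 : a * b * d = a' * b' * d' := by
      rw [← i3, ← i3']; exact quotT3_card_of_opIso hiso
    have j4 : a * b * c = a' * b' * c' := by
      rw [← i4, ← i4']; exact quotT4_card_of_opIso hiso
    have hpp : a * b * c * d = a' * b' * c' * d' := by rw [hprod, hprod']
    have hA : a = a' := by
      have h1 : a * (b * c * d) = a' * (b' * c' * d') := by
        rw [show a * (b * c * d) = a * b * c * d by ring,
          show a' * (b' * c' * d') = a' * b' * c' * d' by ring, hpp]
      rw [j1] at h1
      exact Nat.eq_of_mul_eq_mul_right (by positivity) h1
    have hB : b = b' := by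
      have h1 : b * (a * c * d) = b' * (a' * c' * d') := by
        rw [show b * (a * c * d) = a * b * c * d by ring,
          show b' * (a' * c' * d') = a' * b' * c' * d' by ring, hpp]
      rw [j2] at h1
      exact Nat.eq_of_mul_eq_mul_right (by positivity) h1
    have hC : c = c' := by
      have h1 : c * (a * b * d) = c' * (a' * b' * d') := by
        rw [show c * (a * b * d) = a * b * c * d by ring,
          show c' * (a' * b' * d') = a' * b' * c' * d' by ring, hpp]
      rw [j3] at h1
      exact Nat.eq_of_mul_eq_mul_right (by positivity) h1
    have hD : d = d' := by
      have h1 : d * (a * b * c) = d' * (a' * b' * c') := by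
        rw [show d * (a * b * c) = a * b * c * d by ring,
          show d' * (a' * b' * c') = a' * b' * c' * d' by ring, hpp]
      rw [j4] at h1
      exact Nat.eq_of_mul_eq_mul_right (by positivity) h1
    subst hA; subst hB; subst hC; subst hD
    rfl
  · -- surjectivity
    apply Quot.ind
    intro s
    obtain ⟨A, B, C, D, f, hf1, hf2⟩ :=
      exists_decomp s.1.1 s.1.2 s.2 (⟨0, hnpos⟩ : Fin (p ^ e))
    haveI hfin : Finite (A × B × C × D) := Finite.of_equiv _ f
    haveI hne : Nonempty (A × B × C × D) := ⟨f ⟨0, hnpos⟩⟩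
    haveI : Nonempty A := ⟨hne.some.1⟩
    haveI : Nonempty B := ⟨hne.some.2.1⟩
    haveI : Nonempty C := ⟨hne.some.2.2.1⟩
    haveI : Nonempty D := ⟨hne.some.2.2.2⟩
    haveI : Finite A := Finite.prod_left (B × C × D)
    haveI : Finite (B × C × D) := Finite.prod_right A
    haveI : Finite B := Finite.prod_left (C × D)
    haveI : Finite (C × D) := Finite.prod_right B
    haveI : Finite C := Finite.prod_left D
    haveI : Finite D := Finite.prod_right C
    have hcard : Nat.card A * Nat.card B * Nat.card C * Nat.card D = p ^ e := by
      have h1 : Nat.card (Fin (p ^ e)) = Nat.card (A × B × C × D) := Nat.card_congr f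
      rw [Nat.card_eq_fintype_card, Fintype.card_fin] at h1
      rw [Nat.card_prod, Nat.card_prod, Nat.card_prod] at h1
      rw [h1]; ring
    refine ⟨⟨(Nat.card A, Nat.card B, Nat.card C, Nat.card D),
      Nat.card_pos, Nat.card_pos, Nat.card_pos, Nat.card_pos, hcard⟩, ?_⟩
    apply Quot.sound
    show AntilatticeIso _ s.1
    set g := (Finite.equivFin A).prodCongr ((Finite.equivFin B).prodCongr
      ((Finite.equivFin C).prodCongr (Finite.equivFin D)))
    have hg : OpIso g ((Jop, Mop) : (A × B × C × D → _ → _) × _)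
        ((Jop, Mop) : (Fin (Nat.card A) × Fin (Nat.card B) × Fin (Nat.card C) ×
          Fin (Nat.card D) → _ → _) × _) :=
      ⟨prodCongr_Jop _ _ _ _, prodCongr_Mop _ _ _ _⟩
    have hfo : OpIso f s.1 ((Jop, Mop) : (A × B × C × D → _ → _) × _) := ⟨hf1, hf2⟩
    have hmo := modelOps_opIso (p ^ e) (Nat.card A) (Nat.card B) (Nat.card C) (Nat.card D) hcard
    have htot := opIso_trans hmo (opIso_trans (opIso_symm hg) (opIso_symm hfo))
    exact ⟨_, htot.1, htot.2⟩

end Main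

/-- For a prime `p` and `e ≥ 0`, the number of ordered quadruples of positive
integers with product `p^e` is `C(e+3, 3)`; consequently the number of
isomorphism classes of regular antilattices of order `p^e` is `C(e+3, 3)`. -/
theorem count_regular_antilattices_prime_power (p e : ℕ) (hp : p.Prime) :
    Nat.card {q : ℕ × ℕ × ℕ × ℕ //
        0 < q.1 ∧ 0 < q.2.1 ∧ 0 < q.2.2.1 ∧ 0 < q.2.2.2 ∧
        q.1 * q.2.1 * q.2.2.1 * q.2.2.2 = p ^ e} = (e + 3).choose 3 ∧
    Nat.card (Quot (fun a b :
        {jm : (Fin (p ^ e) → Fin (p ^ e) → Fin (p ^ e)) ×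
              (Fin (p ^ e) → Fin (p ^ e) → Fin (p ^ e)) //
          IsRegularAntilattice jm.1 jm.2} => AntilatticeIso a.1 b.1)) =
      (e + 3).choose 3 := by
  exact ⟨part1 p e hp, (part2 p e hp).trans (part1 p e hp)⟩
end
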